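/- Let n = p₁·p₂···p_t be a (b,P,Q)-challenge pseudoprime with distinct prime factors p_i. Let L = lcm(ℓ_b(p₁),...,ℓ_b(p_t)) where ℓ_b(p) is the multiplicative order of b mod p, and W = lcm(ω(p₁),...,ω(p_t)) where ω(p) is the rank of apparition of p for the Lucas sequence (P,Q). Then gcd(L,W) ≤ 2, gcd(n,L) = 1, and gcd(n,W) = 1. -/

import Mathlib

/-- The Lucas sequence `U` with parameters `(P, Q)`. -/
def lucasU (P Q : ℤ) : ℕ → ℤ
  | 0 => 0
  | 1 => 1
  | (n + 2) => P * lucasU P Q (n + 1) - Q * lucasU P Q n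

lemma lucasU_add (P Q : ℤ) (m n : ℕ) :
    lucasU P Q (m + n + 1) =
      lucasU P Q (m+1) * lucasU P Q (n+1) - Q * lucasU P Q m * lucasU P Q n := by
  induction m using Nat.strong_induction_on with
  | _ m ih =>
    match m with
    | 0 => simp [lucasU]
    | 1 =>
      rw [show 1 + n + 1 = n + 2 from by omega]
      simp only [lucasU]; ring
    | (m+2) =>
      have h1 := ih (m+1) (by omega)
      have h0 := ih m (by omega)
      have e1 : m + 2 + n + 1 = (m + n + 1) + 2 := by omega
      have e2 : m + 1 + n + 1 = (m + n + 1) + 1 := by omega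
      rw [e1, show lucasU P Q ((m+n+1)+2) = P * lucasU P Q ((m+n+1)+1) - Q * lucasU P Q (m+n+1) from rfl,
        ← e2, h1, h0,
        show lucasU P Q (m+3) = P * lucasU P Q (m+2) - Q * lucasU P Q (m+1) from rfl,
        show lucasU P Q (m+2) = P * lucasU P Q (m+1) - Q * lucasU P Q m from rfl]
      ring


/-- The rank of apparition of `p` for the Lucas sequence with parameters `(P, Q)`:
the least `m > 0` such that `p ∣ U_m`. -/
noncomputable def rankApp (P Q : ℤ) (p : ℕ) : ℕ :=
  sInf {m : ℕ | 0 < m ∧ (p : ℤ) ∣ lucasU P Q m}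

lemma rank_aux (P Q : ℤ) (p : ℕ) (hp : p.Prime) (hQ : ¬ (p : ℤ) ∣ Q)
    (r : ℕ) (hr0 : 0 < r) (hrdvd : (p : ℤ) ∣ lucasU P Q r)
    (hmin : ∀ t, 0 < t → t < r → ¬ (p : ℤ) ∣ lucasU P Q t)
    (m : ℕ) (hm : (p : ℤ) ∣ lucasU P Q m) : r ∣ m := by
  have hpZ : Prime (p : ℤ) := Nat.prime_iff_prime_int.mp hp
  have hp1 : ¬ (p : ℤ) ∣ (1 : ℤ) := by
    intro h
    have h2 := Int.eq_one_of_dvd_one (by positivity) h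
    have : p = 1 := by exact_mod_cast h2
    exact hp.ne_one this
  -- r ≥ 2
  have hr2 : 2 ≤ r := by
    by_contra h
    have : r = 1 := by omega
    subst this
    exact absurd hrdvd (by simpa [lucasU] using hp1)
  -- p does not divide U_{r+1}
  have hrsucc : ¬ (p : ℤ) ∣ lucasU P Q (r + 1) := by
    intro hd
    obtain ⟨r', rfl⟩ : ∃ r', r = r' + 2 := ⟨r - 2, by omega⟩
    have e : lucasU P Q (r' + 2 + 1) = P * lucasU P Q (r' + 2) - Q * lucasU P Q (r' + 1) := rfl
    rw [e] at hd
    have h2 : (p : ℤ) ∣ Q * lucasU P Q (r' + 1) := by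
      have h3 : Q * lucasU P Q (r' + 1) =
          P * lucasU P Q (r' + 2) - (P * lucasU P Q (r' + 2) - Q * lucasU P Q (r' + 1)) := by
        ring
      rw [h3]; exact dvd_sub (hrdvd.mul_left P) hd
    rcases hpZ.dvd_mul.mp h2 with h | h
    · exact hQ h
    · exact hmin (r' + 1) (by omega) (by omega) h
  obtain ⟨r', hr'⟩ : ∃ r', r = r' + 1 := ⟨r - 1, by omega⟩
  -- multiples of r
  have hmult : ∀ j, (p : ℤ) ∣ lucasU P Q (j * r) ∧ ¬ (p : ℤ) ∣ lucasU P Q (j * r + 1) := by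
    intro j
    induction j with
    | zero => simpa [lucasU] using hp1
    | succ j ih =>
      obtain ⟨ihd, ihnd⟩ := ih
      constructor
      · have e : (j + 1) * r = j * r + r' + 1 := by
          rw [add_mul, one_mul, hr']; omega
        rw [e, lucasU_add, ← hr']
        exact dvd_sub (hrdvd.mul_left _) ((ihd.mul_left Q).mul_right _)
      · have e : (j + 1) * r + 1 = j * r + r + 1 := by rw [add_mul, one_mul]
        rw [e, lucasU_add]
        intro hd
        have h2 : (p : ℤ) ∣ lucasU P Q (j * r + 1) * lucasU P Q (r + 1) := by
          have h3 : lucasU P Q (j * r + 1) * lucasU P Q (r + 1) =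
              (lucasU P Q (j * r + 1) * lucasU P Q (r + 1) -
                Q * lucasU P Q (j * r) * lucasU P Q r) +
                Q * lucasU P Q (j * r) * lucasU P Q r := by ring
          rw [h3]
          exact dvd_add hd ((ihd.mul_left Q).mul_right _)
        rcases hpZ.dvd_mul.mp h2 with h | h
        · exact ihnd h
        · exact hrsucc h
  -- division with remainder
  have hdm : m / r * r + m % r = m := by rw [mul_comm]; exact Nat.div_add_mod m r
  rcases Nat.eq_zero_or_pos (m % r) with h0 | hpos
  · exact Nat.dvd_of_mod_eq_zero h0
  exfalso
  obtain ⟨t', ht'⟩ : ∃ t', m % r = t' + 1 := ⟨m % r - 1, by omega⟩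
  have hlt : m % r < r := Nat.mod_lt m (by omega)
  have e : m = m / r * r + t' + 1 := by
    conv_lhs => rw [← hdm]
    rw [ht', add_assoc]
  rw [e, lucasU_add] at hm
  have h2 : (p : ℤ) ∣ lucasU P Q (m / r * r + 1) * lucasU P Q (t' + 1) := by
    have h3 : lucasU P Q (m / r * r + 1) * lucasU P Q (t' + 1) =
        (lucasU P Q (m / r * r + 1) * lucasU P Q (t' + 1) -
          Q * lucasU P Q (m / r * r) * lucasU P Q t') +
          Q * lucasU P Q (m / r * r) * lucasU P Q t' := by ring
    rw [h3]
    exact dvd_add hm (((hmult (m / r)).1.mul_left Q).mul_right _)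
  rcases hpZ.dvd_mul.mp h2 with h | h
  · exact (hmult (m / r)).2 h
  · exact hmin (t' + 1) (by omega) (by omega) h

lemma rankApp_dvd (P Q : ℤ) (p : ℕ) (hp : p.Prime) (hQ : ¬ (p : ℤ) ∣ Q)
    (m : ℕ) (hm : (p : ℤ) ∣ lucasU P Q m) : rankApp P Q p ∣ m := by
  rcases Nat.eq_zero_or_pos m with rfl | hm0
  · exact dvd_zero _
  have hne : {k : ℕ | 0 < k ∧ (p : ℤ) ∣ lucasU P Q k}.Nonempty := ⟨m, hm0, hm⟩
  have hrmem : 0 < rankApp P Q p ∧ (p : ℤ) ∣ lucasU P Q (rankApp P Q p) :=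
    Nat.sInf_mem hne
  refine rank_aux P Q p hp hQ _ hrmem.1 hrmem.2 ?_ m hm
  intro t ht0 htr hd
  have hle : rankApp P Q p ≤ t := Nat.sInf_le ⟨ht0, hd⟩
  omega

/-- A `(b, P, Q)`-challenge pseudoprime: a composite `n` which is a base-`b` Fermat
pseudoprime, a `(P, Q)`-Lucas pseudoprime, and satisfies `(D | n) = -1` where
`D = P² - 4Q` (so the Lucas condition reads `n ∣ U_{n+1}`). -/
def IsChallengePsp (b : ℕ) (P Q : ℤ) (n : ℕ) : Prop :=
  1 < n ∧ ¬ n.Prime ∧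
  Nat.Coprime n b ∧ Int.gcd (n : ℤ) (2 * Q * (P ^ 2 - 4 * Q)) = 1 ∧
  b ^ (n - 1) ≡ 1 [MOD n] ∧
  jacobiSym (P ^ 2 - 4 * Q) n = -1 ∧
  (n : ℤ) ∣ lucasU P Q (n + 1)

theorem challenge_psp_admissible
    (b : ℕ) (P Q : ℤ) (n : ℕ) (s : Finset ℕ)
    (hs : ∀ p ∈ s, p.Prime)
    (hn : n = ∏ p ∈ s, p)
    (hpsp : IsChallengePsp b P Q n)
    (L W : ℕ)
    (hL : L = s.lcm (fun p => orderOf (b : ZMod p)))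
    (hW : W = s.lcm (fun p => rankApp P Q p)) :
    Nat.gcd L W ≤ 2 ∧ Nat.gcd n L = 1 ∧ Nat.gcd n W = 1 := by
  obtain ⟨hn1, -, -, hgcd, hferm, -, hluc⟩ := hpsp
  -- L divides n - 1
  have hLd : L ∣ n - 1 := by
    rw [hL]
    apply Finset.lcm_dvd
    intro p hps
    have hpprime := hs p hps
    have hpd : p ∣ n := hn ▸ Finset.dvd_prod_of_mem _ hps
    have hmod : b ^ (n - 1) ≡ 1 [MOD p] := hferm.of_dvd hpd
    have : ((b : ZMod p)) ^ (n - 1) = 1 := by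
      have := (ZMod.natCast_eq_natCast_iff _ _ _).mpr hmod
      push_cast at this
      exact this
    exact orderOf_dvd_of_pow_eq_one this
  -- W divides n + 1
  have hWd : W ∣ n + 1 := by
    rw [hW]
    apply Finset.lcm_dvd
    intro p hps
    have hpprime := hs p hps
    have hpd : p ∣ n := hn ▸ Finset.dvd_prod_of_mem _ hps
    have hQp : ¬ (p : ℤ) ∣ Q := by
      intro hdq
      have h1 : (p : ℤ) ∣ (n : ℤ) := Int.natCast_dvd_natCast.mpr hpd
      have h2 : (p : ℤ) ∣ 2 * Q * (P ^ 2 - 4 * Q) := (hdq.mul_left 2).mul_right _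
      have h3 : (p : ℤ) ∣ ((Int.gcd (n : ℤ) (2 * Q * (P ^ 2 - 4 * Q)) : ℕ) : ℤ) :=
        Int.dvd_coe_gcd h1 h2
      rw [hgcd] at h3
      have h4 : p ∣ 1 := by exact_mod_cast h3
      exact hpprime.ne_one (Nat.dvd_one.mp h4)
    have hpU : (p : ℤ) ∣ lucasU P Q (n + 1) :=
      dvd_trans (Int.natCast_dvd_natCast.mpr hpd) hluc
    exact rankApp_dvd P Q p hpprime hQp _ hpU
  refine ⟨?_, ?_, ?_⟩
  · -- gcd L W ≤ 2
    have h1 : Nat.gcd L W ∣ n - 1 := dvd_trans (Nat.gcd_dvd_left _ _) hLd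
    have h2 : Nat.gcd L W ∣ n + 1 := dvd_trans (Nat.gcd_dvd_right _ _) hWd
    have h3 : Nat.gcd L W ∣ 2 := by
      have := Nat.dvd_sub h2 h1
      rwa [show n + 1 - (n - 1) = 2 by omega] at this
    exact Nat.le_of_dvd (by norm_num) h3
  · -- gcd n L = 1
    have h1 : Nat.gcd n L ∣ n - 1 := dvd_trans (Nat.gcd_dvd_right _ _) hLd
    have h2 : Nat.gcd n L ∣ n := Nat.gcd_dvd_left _ _
    have h3 : Nat.gcd n L ∣ 1 := by
      have := Nat.dvd_sub h2 h1
      rwa [show n - (n - 1) = 1 by omega] at this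
    exact Nat.dvd_one.mp h3
  · -- gcd n W = 1
    have h1 : Nat.gcd n W ∣ n + 1 := dvd_trans (Nat.gcd_dvd_right _ _) hWd
    have h2 : Nat.gcd n W ∣ n := Nat.gcd_dvd_left _ _
    have h3 : Nat.gcd n W ∣ 1 := by
      have := Nat.dvd_sub h1 h2
      rwa [show n + 1 - n = 1 by omega] at this
    exact Nat.dvd_one.mp h3
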